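/- Let H and U₀ be complex Hilbert spaces, let s < T be real numbers, let α ∈ (0,1) and c ≥ 0. Suppose: (i) U(t,r) ∈ L(H) is defined for s ≤ r ≤ t < T, is strongly continuous, uniformly bounded on every compact subset of its domain, and satisfies U(t,t) = I and the evolution property U(t,q)U(q,r) = U(t,r) for s ≤ r ≤ q ≤ t < T; (ii) V(t,r) ∈ L(U₀,H) is defined for s ≤ r < t < T, is continuous in operator norm, satisfies ‖V(t,r)‖ ≤ c (t−r)^{α−1}, and satisfies the factorization V(t,r) = U(t,q)V(q,r) for s ≤ r < q ≤ t < T; (iii) S : [s,T) → L(H,U₀) is continuous in operator norm. For each σ ∈ [s,T) and x ∈ H let t ↦ Φ(t,σ)x be the unique continuous H-valued solution on [σ,T) of y(t) = U(t,σ)x − ∫_σ^t V(t,r)S(r)y(r) dr. Then Φ(t,s)x = Φ(t,q)(Φ(q,s)x) for all s ≤ q ≤ t < T and all x ∈ H. -/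
import Mathlib


open MeasureTheory intervalIntegral Set

/-- Transitivity `Φ(t,s) = Φ(t,q) Φ(q,s)` of the solution of the closed loop
equation `y(t) = U(t,σ)x − ∫_σ^t V(t,r) S(r) y(r) dr`, where `U` is an evolution
operator, `V` has a weakly singular norm bound and factorizes as
`V(t,r) = U(t,q)V(q,r)`, and `S` is norm-continuous. -/
theorem closed_loop_solution_transitivity
    {H U₀ : Type*} [NormedAddCommGroup H] [InnerProductSpace ℂ H] [CompleteSpace H]
    [NormedAddCommGroup U₀] [InnerProductSpace ℂ U₀] [CompleteSpace U₀]
    (s T : ℝ) (hsT : s < T) (α c : ℝ) (hα : α ∈ Set.Ioo (0 : ℝ) 1) (hc : 0 ≤ c)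
    (U : ℝ → ℝ → H →L[ℂ] H) (V : ℝ → ℝ → U₀ →L[ℂ] H) (S : ℝ → H →L[ℂ] U₀)
    -- (i) strong continuity, local uniform boundedness, identity and evolution property of U
    (hUstrong : ∀ x : H, ContinuousOn (fun p : ℝ × ℝ => U p.1 p.2 x)
      {p : ℝ × ℝ | s ≤ p.2 ∧ p.2 ≤ p.1 ∧ p.1 < T})
    (hUbdd : ∀ Kc : Set (ℝ × ℝ), IsCompact Kc →
      Kc ⊆ {p : ℝ × ℝ | s ≤ p.2 ∧ p.2 ≤ p.1 ∧ p.1 < T} →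
      ∃ M : ℝ, ∀ p ∈ Kc, ‖U p.1 p.2‖ ≤ M)
    (hUid : ∀ t : ℝ, s ≤ t → t < T → U t t = 1)
    (hUev : ∀ r q t : ℝ, s ≤ r → r ≤ q → q ≤ t → t < T →
      (U t q).comp (U q r) = U t r)
    -- (ii) norm continuity, weakly singular bound and factorization of V
    (hVcont : ContinuousOn (fun p : ℝ × ℝ => V p.1 p.2)
      {p : ℝ × ℝ | s ≤ p.2 ∧ p.2 < p.1 ∧ p.1 < T})
    (hVbound : ∀ t r : ℝ, s ≤ r → r < t → t < T →
      ‖V t r‖ ≤ c * (t - r) ^ (α - 1))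
    (hVfact : ∀ r q t : ℝ, s ≤ r → r < q → q ≤ t → t < T →
      V t r = (U t q).comp (V q r))
    -- (iii) norm continuity of S
    (hScont : ContinuousOn S (Set.Ico s T))
    -- Φ(·,σ)x is the unique continuous solution of the closed loop equation on [σ,T)
    (Φ : ℝ → ℝ → H → H)
    (hΦcont : ∀ σ ∈ Set.Ico s T, ∀ x : H,
      ContinuousOn (fun t => Φ t σ x) (Set.Ico σ T))
    (hΦeq : ∀ σ ∈ Set.Ico s T, ∀ x : H, ∀ t ∈ Set.Ico σ T,
      Φ t σ x = U t σ x - ∫ r in σ..t, V t r (S r (Φ r σ x)))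
    (hΦuniq : ∀ σ ∈ Set.Ico s T, ∀ x : H, ∀ y : ℝ → H,
      ContinuousOn y (Set.Ico σ T) →
      (∀ t ∈ Set.Ico σ T, y t = U t σ x - ∫ r in σ..t, V t r (S r (y r))) →
      ∀ t ∈ Set.Ico σ T, y t = Φ t σ x) :
    ∀ q t : ℝ, s ≤ q → q ≤ t → t < T → ∀ x : H, Φ t s x = Φ t q (Φ q s x) := by
  intro q t hsq hqt htT x
  have hsT' : s < T := hsT
  have hqT : q < T := lt_of_le_of_lt hqt htT
  -- continuity of the feedback term on [s,T)
  have hGcont : ContinuousOn (fun r => S r (Φ r s x)) (Set.Ico s T) :=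
    hScont.clm_apply (hΦcont s ⟨le_rfl, hsT'⟩ x)
  -- integrability of r ↦ V t0 r (S r (Φ r s x)) on [a,b] whenever s ≤ a ≤ b ≤ t0 < T
  have hInt : ∀ t0 a b : ℝ, s ≤ a → a ≤ b → b ≤ t0 → t0 < T →
      IntervalIntegrable (fun r => V t0 r (S r (Φ r s x))) volume a b := by
    intro t0 a b hsa hab hbt0 ht0T
    have hst0 : s ≤ t0 := le_trans hsa (le_trans hab hbt0)
    obtain ⟨M, hM⟩ := (isCompact_Icc (a := s) (b := t0)).exists_bound_of_continuousOn
      (hGcont.mono (fun r hr => ⟨hr.1, lt_of_le_of_lt hr.2 ht0T⟩))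
    have hM0 : 0 ≤ M := le_trans (norm_nonneg _) (hM t0 ⟨hst0, le_rfl⟩)
    have hg : IntervalIntegrable (fun r : ℝ => c * M * (t0 - r) ^ (α - 1)) volume a b := by
      have h1 : IntervalIntegrable (fun r : ℝ => r ^ (α - 1)) volume (t0 - a) (t0 - b) :=
        intervalIntegral.intervalIntegrable_rpow' (by linarith [hα.1])
      have h2 := h1.comp_sub_left t0
      simp only [sub_sub_cancel] at h2
      exact h2.const_mul (c * M)
    rw [intervalIntegrable_iff_integrableOn_Ioc_of_le hab]
    have hgint : IntegrableOn (fun r : ℝ => c * M * (t0 - r) ^ (α - 1)) (Set.Ioc a b) volume := by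
      rw [intervalIntegrable_iff_integrableOn_Ioc_of_le hab] at hg
      exact hg
    refine Integrable.mono' hgint ?_ ?_
    · have hcont : ContinuousOn (fun r => V t0 r (S r (Φ r s x))) (Set.Ico s t0) := by
        have hV1 : ContinuousOn (fun r => V t0 r) (Set.Ico s t0) := by
          have hc2 : ContinuousOn (fun r : ℝ => ((t0, r) : ℝ × ℝ)) (Set.Ico s t0) :=
            (continuous_const.prodMk continuous_id).continuousOn
          exact hVcont.comp hc2 (fun r hr => ⟨hr.1, hr.2, ht0T⟩)
        exact hV1.clm_apply (hGcont.mono (fun r hr => ⟨hr.1, lt_of_lt_of_le hr.2 (le_of_lt ht0T)⟩))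
      have hsub : Set.Ioo a b ⊆ Set.Ico s t0 := fun r hr =>
        ⟨le_trans hsa (le_of_lt hr.1), lt_of_lt_of_le hr.2 hbt0⟩
      have hmeas : AEStronglyMeasurable (fun r => V t0 r (S r (Φ r s x)))
          (volume.restrict (Set.Ioo a b)) :=
        (hcont.mono hsub).aestronglyMeasurable measurableSet_Ioo
      rwa [Measure.restrict_congr_set Ioo_ae_eq_Ioc] at hmeas
    · rw [← Measure.restrict_congr_set Ioo_ae_eq_Ioc]
      filter_upwards [ae_restrict_mem measurableSet_Ioo] with r hr
      have hrs : s ≤ r := le_trans hsa (le_of_lt hr.1)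
      have hrt0 : r < t0 := lt_of_lt_of_le hr.2 hbt0
      calc ‖V t0 r (S r (Φ r s x))‖ ≤ ‖V t0 r‖ * ‖S r (Φ r s x)‖ := (V t0 r).le_opNorm _
        _ ≤ (c * (t0 - r) ^ (α - 1)) * M := by
            apply mul_le_mul (hVbound t0 r hrs hrt0 ht0T)
              (hM r ⟨hrs, le_of_lt hrt0⟩) (norm_nonneg _)
            exact mul_nonneg hc (Real.rpow_nonneg (by linarith) _)
        _ = c * M * (t0 - r) ^ (α - 1) := by ring
  -- apply uniqueness with σ = q, initial value Φ q s x, candidate y = Φ · s x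
  refine hΦuniq q ⟨hsq, hqT⟩ (Φ q s x) (fun t => Φ t s x)
    ((hΦcont s ⟨le_rfl, hsT'⟩ x).mono (Set.Ico_subset_Ico_left hsq)) ?_ t ⟨hqt, htT⟩
  intro t' ht'
  obtain ⟨hqt', ht'T⟩ := ht'
  have hst' : s ≤ t' := le_trans hsq hqt'
  have heq := hΦeq s ⟨le_rfl, hsT'⟩ x t' ⟨hst', ht'T⟩
  have hI1 : IntervalIntegrable (fun r => V t' r (S r (Φ r s x))) volume s q :=
    hInt t' s q le_rfl hsq hqt' ht'T
  have hI2 : IntervalIntegrable (fun r => V t' r (S r (Φ r s x))) volume q t' :=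
    hInt t' q t' hsq hqt' le_rfl ht'T
  have hsplit : (∫ r in s..q, V t' r (S r (Φ r s x)))
        + (∫ r in q..t', V t' r (S r (Φ r s x)))
      = ∫ r in s..t', V t' r (S r (Φ r s x)) :=
    intervalIntegral.integral_add_adjacent_intervals hI1 hI2
  have hIq : IntervalIntegrable (fun r => V q r (S r (Φ r s x))) volume s q :=
    hInt q s q le_rfl hsq le_rfl hqT
  have hfst : (∫ r in s..q, V t' r (S r (Φ r s x)))
      = U t' q (∫ r in s..q, V q r (S r (Φ r s x))) := by
    rw [← (U t' q).intervalIntegral_comp_comm hIq]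
    apply intervalIntegral.integral_congr_ae
    have hq0 : ∀ᵐ r : ℝ, r ≠ q := by
      have : (volume : Measure ℝ) {q} = 0 := measure_singleton q
      exact compl_mem_ae_iff.mpr this
    filter_upwards [hq0] with r hrq hr
    rw [Set.uIoc_of_le hsq] at hr
    have hrq' : r < q := lt_of_le_of_ne hr.2 hrq
    rw [hVfact r q t' (le_of_lt hr.1) hrq' hqt' ht'T]
    rfl
  have hΦq : Φ q s x = U q s x - ∫ r in s..q, V q r (S r (Φ r s x)) :=
    hΦeq s ⟨le_rfl, hsT'⟩ x q ⟨hsq, hqT⟩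
  have hUs : U t' s x = U t' q (U q s x) := by
    rw [← hUev s q t' le_rfl hsq hqt' ht'T]; rfl
  show Φ t' s x = U t' q (Φ q s x) - ∫ r in q..t', V t' r (S r (Φ r s x))
  rw [heq, ← hsplit, hfst, hΦq, map_sub, hUs]
  abel
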